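/- arXiv:1606.09144 — 2 statements merged into one kernel-verified Lean document; each statement's English description precedes it below -/
import Mathlib

section
/- Let m > 0. Assuming the reproducing kernel norm estimate ‖K_{(m,w)}‖_{(m,2)}^2 ≍ |w|^{m-2} e^{2|w|^m} as |w| → ∞, one has ‖∂/∂w̄ K_{(m,w)}‖_{(m,2)}^2 ≍ |w|^{3m-4} e^{2|w|^m} ≍ ‖K_{(m,w)}‖_{(m,2)}^2 |w|^{2m-2} as |w| → ∞. -/
open MeasureTheory Real Complex

/-- The squared `F_{(m,2)}`-norm of the monomial `z ^ n`. -/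
noncomputable def monomialNormSq (m : ℝ) (n : ℕ) : ℝ :=
  ∫ z : ℂ, ‖z‖ ^ (2 * (n : ℝ)) * Real.exp (-2 * ‖z‖ ^ m)

/-- `‖K_{(m,w)}‖² = Σ_n |e_n(w)|²` for the orthonormal basis of normalized monomials. -/
noncomputable def kernelNormSq (m : ℝ) (w : ℂ) : ℝ :=
  ∑' n : ℕ, ‖w‖ ^ (2 * (n : ℝ)) / monomialNormSq m n

/-- `‖∂/∂w̄ K_{(m,w)}‖² = Σ_n |e_n'(w)|²` for the orthonormal basis of normalized
monomials. -/
noncomputable def kernelDerivNormSq (m : ℝ) (w : ℂ) : ℝ :=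
  ∑' n : ℕ, (n : ℝ) ^ 2 * ‖w‖ ^ (2 * ((n : ℝ) - 1)) / monomialNormSq m n

lemma monoNN (m : ℝ) (n : ℕ) : 0 ≤ monomialNormSq m n :=
  integral_nonneg fun z => by positivity

noncomputable def SS (m b : ℝ) : ℝ := ∑' n : ℕ, b ^ n / monomialNormSq m n

noncomputable def DD (m b : ℝ) : ℝ :=
  ∑' n : ℕ, (n : ℝ) ^ 2 * b ^ (n - 1) / monomialNormSq m n

lemma kernelNormSq_eq_SS (m : ℝ) (w : ℂ) : kernelNormSq m w = SS m (‖w‖ ^ 2) := by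
  unfold kernelNormSq SS
  refine tsum_congr fun n => ?_
  congr 1
  rw [show (2 * (n : ℝ)) = (((2 * n : ℕ) : ℝ)) by push_cast; ring,
    Real.rpow_natCast, pow_mul]

lemma kernelDerivNormSq_eq_DD (m : ℝ) (w : ℂ) :
    kernelDerivNormSq m w = DD m (‖w‖ ^ 2) := by
  unfold kernelDerivNormSq DD
  refine tsum_congr fun n => ?_
  cases n with
  | zero => simp
  | succ k =>
    congr 1
    congr 1
    rw [show (2 * (((k + 1 : ℕ) : ℝ) - 1)) = (((2 * k : ℕ) : ℝ)) by push_cast; ring,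
      Real.rpow_natCast, pow_mul]
    norm_num

lemma aux_binom' (δ : ℝ) (hδ : 0 ≤ δ) :
    ∀ n : ℕ, 1 + (n : ℝ) * δ + (n : ℝ) * ((n : ℝ) - 1) / 2 * δ ^ 2 ≤ (1 + δ) ^ n := by
  intro n
  induction n with
  | zero => norm_num
  | succ k ih =>
    have h1 : (0:ℝ) ≤ 1 + δ := by linarith
    have h2 : (0:ℝ) ≤ (k:ℝ) := Nat.cast_nonneg k
    have hstep : (1 + (k:ℝ) * δ + (k:ℝ) * ((k:ℝ) - 1) / 2 * δ ^ 2) * (1 + δ) ≤ (1 + δ) ^ (k+1) := by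
      rw [pow_succ]
      exact mul_le_mul_of_nonneg_right ih h1
    have h3 : 0 ≤ (k:ℝ) * ((k:ℝ) - 1) := by
      rcases Nat.eq_zero_or_pos k with h | h
      · simp [h]
      · have : (1:ℝ) ≤ (k:ℝ) := by exact_mod_cast h
        nlinarith
    push_cast
    nlinarith [mul_nonneg (mul_nonneg (mul_nonneg h3 hδ) hδ) hδ]

lemma aux_binom (δ : ℝ) (hδ : 0 ≤ δ) : ∀ n : ℕ, (n : ℝ) * ((n : ℝ) - 1) / 2 * δ ^ 2 ≤ (1 + δ) ^ n := by
  intro n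
  have := aux_binom' δ hδ n
  have h2 : (0:ℝ) ≤ (n:ℝ) := Nat.cast_nonneg n
  nlinarith [mul_nonneg h2 hδ]

lemma aux_nsq (δ : ℝ) (h0 : 0 < δ) (h1 : δ ≤ 1) (n : ℕ) :
    (n : ℝ) ^ 2 * (1 / (1 + δ)) ^ n ≤ 4 / δ ^ 2 := by
  have hpos : (0:ℝ) < 1 + δ := by linarith
  have hp : (0:ℝ) < (1 + δ) ^ n := pow_pos hpos n
  rw [div_pow, one_pow, mul_one_div, div_le_div_iff₀ hp (by positivity)]
  match n with
  | 0 => push_cast; nlinarith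
  | 1 => push_cast; nlinarith
  | (k+2) =>
    have hb := aux_binom δ h0.le (k+2)
    have hk : (0:ℝ) ≤ (k:ℝ) := Nat.cast_nonneg k
    push_cast at hb ⊢
    nlinarith [sq_nonneg δ, sq_nonneg ((k:ℝ)+2), mul_nonneg (sq_nonneg ((k:ℝ))) (sq_nonneg δ)]
lemma term_nonneg (m b : ℝ) (hb : 0 ≤ b) (n : ℕ) : 0 ≤ b ^ n / monomialNormSq m n :=
  div_nonneg (pow_nonneg hb n) (monoNN m n)

lemma SS_nonneg (m b : ℝ) (hb : 0 ≤ b) : 0 ≤ SS m b :=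
  tsum_nonneg (term_nonneg m b hb)

lemma dterm_nonneg (m b : ℝ) (hb : 0 ≤ b) (n : ℕ) :
    0 ≤ (n : ℝ) ^ 2 * b ^ (n - 1) / monomialNormSq m n :=
  div_nonneg (mul_nonneg (by positivity) (pow_nonneg hb _)) (monoNN m n)

lemma dterm_le (m b δ : ℝ) (hb : 0 < b) (h0 : 0 < δ) (h1 : δ ≤ 1) (n : ℕ) :
    (n : ℝ) ^ 2 * b ^ (n - 1) / monomialNormSq m n
      ≤ (4 / (δ ^ 2 * b)) * ((b * (1 + δ)) ^ n / monomialNormSq m n) := by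
  have hc := monoNN m n
  have hδp : (0:ℝ) < 1 + δ := by linarith
  have hnum : (n : ℝ) ^ 2 * b ^ (n - 1) ≤ (4 / (δ ^ 2 * b)) * (b * (1 + δ)) ^ n := by
    cases n with
    | zero => simp; positivity
    | succ k =>
      have key2 : ((k+1 : ℕ):ℝ) ^ 2 * δ ^ 2 ≤ 4 * (1 + δ) ^ (k+1) := by
        have h := aux_nsq δ h0 h1 (k+1)
        rw [div_pow, one_pow, mul_one_div,
          div_le_div_iff₀ (pow_pos hδp _) (by positivity)] at h
        exact h
      have hpow : b ^ (k + 1 - 1) = b ^ (k+1) / b := by rw [Nat.add_sub_cancel, pow_succ, mul_div_assoc, div_self hb.ne', mul_one]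
      rw [hpow, mul_pow]
      calc ((k+1 : ℕ):ℝ) ^ 2 * (b ^ (k+1) / b)
          = (((k+1 : ℕ):ℝ) ^ 2 * δ ^ 2) * (b ^ (k+1) / (δ ^ 2 * b)) := by
            field_simp
        _ ≤ (4 * (1 + δ) ^ (k+1)) * (b ^ (k+1) / (δ ^ 2 * b)) :=
            mul_le_mul_of_nonneg_right key2 (by positivity)
        _ = 4 / (δ ^ 2 * b) * (b ^ (k+1) * (1 + δ) ^ (k+1)) := by
            field_simp
  rw [← mul_div_assoc]
  rcases eq_or_lt_of_le hc with hceq | hcpos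
  · rw [← hceq]; simp
  exact (div_le_div_iff_of_pos_right hcpos).mpr hnum
lemma dsummable (m b δ : ℝ) (hb : 0 < b) (h0 : 0 < δ) (h1 : δ ≤ 1)
    (hs : Summable fun n => (b * (1 + δ)) ^ n / monomialNormSq m n) :
    Summable fun n : ℕ => (n : ℝ) ^ 2 * b ^ (n - 1) / monomialNormSq m n :=
  Summable.of_nonneg_of_le (dterm_nonneg m b hb.le) (dterm_le m b δ hb h0 h1)
    (hs.mul_left _)

lemma DD_le (m b δ : ℝ) (hb : 0 < b) (h0 : 0 < δ) (h1 : δ ≤ 1)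
    (hs : Summable fun n => (b * (1 + δ)) ^ n / monomialNormSq m n) :
    DD m b ≤ (4 / (δ ^ 2 * b)) * SS m (b * (1 + δ)) := by
  have := Summable.tsum_le_tsum (dterm_le m b δ hb h0 h1) (dsummable m b δ hb h0 h1 hs)
    (hs.mul_left _)
  rwa [tsum_mul_left] at this

lemma head_le (m b : ℝ) (hb : 0 ≤ b) (N : ℕ)
    (hs : Summable fun n => (b / 2) ^ n / monomialNormSq m n) :
    ∑ i ∈ Finset.range N, b ^ i / monomialNormSq m i ≤ 2 ^ N * SS m (b / 2) := by
  have h1 : ∀ i ∈ Finset.range N, b ^ i / monomialNormSq m i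
      ≤ 2 ^ N * ((b / 2) ^ i / monomialNormSq m i) := by
    intro i hi
    have hiN : i < N := Finset.mem_range.mp hi
    have : b ^ i / monomialNormSq m i = 2 ^ i * ((b / 2) ^ i / monomialNormSq m i) := by
      rw [div_pow, ← mul_div_assoc]
      congr 1
      field_simp
    rw [this]
    apply mul_le_mul_of_nonneg_right _ (term_nonneg m (b/2) (by linarith) i)
    exact pow_le_pow_right₀ (by norm_num) hiN.le
  calc ∑ i ∈ Finset.range N, b ^ i / monomialNormSq m i
      ≤ ∑ i ∈ Finset.range N, 2 ^ N * ((b / 2) ^ i / monomialNormSq m i) :=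
        Finset.sum_le_sum h1
    _ = 2 ^ N * ∑ i ∈ Finset.range N, ((b / 2) ^ i / monomialNormSq m i) := by
        rw [Finset.mul_sum]
    _ ≤ 2 ^ N * SS m (b / 2) := by
        apply mul_le_mul_of_nonneg_left _ (by positivity)
        exact Summable.sum_le_tsum _ (fun i _ => term_nonneg m (b/2) (by linarith) i) hs

lemma DD_ge (m b : ℝ) (hb : 0 < b) (N : ℕ) (hN : 1 ≤ N)
    (hsb : Summable fun n => b ^ n / monomialNormSq m n)
    (hsd : Summable fun n : ℕ => (n : ℝ) ^ 2 * b ^ (n - 1) / monomialNormSq m n) :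
    ((N : ℝ) ^ 2 / b) * (SS m b - ∑ i ∈ Finset.range N, b ^ i / monomialNormSq m i)
      ≤ DD m b := by
  have htail : SS m b - ∑ i ∈ Finset.range N, b ^ i / monomialNormSq m i
      = ∑' n : ℕ, b ^ (n + N) / monomialNormSq m (n + N) := by
    have := (Summable.sum_add_tsum_nat_add (f := fun n => b ^ n / monomialNormSq m n) N hsb).symm
    rw [SS]
    linarith [this]
  rw [htail]
  have hterm : ∀ n : ℕ, ((N : ℝ) ^ 2 / b) * (b ^ (n + N) / monomialNormSq m (n + N))
      ≤ ((n + N : ℕ) : ℝ) ^ 2 * b ^ (n + N - 1) / monomialNormSq m (n + N) := by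
    intro n
    have hc := monoNN m (n + N)
    rcases eq_or_lt_of_le hc with hceq | hcpos
    · rw [← hceq]; simp
    rw [show ((N : ℝ) ^ 2 / b) * (b ^ (n + N) / monomialNormSq m (n + N))
        = ((N : ℝ) ^ 2 * b ^ (n + N) / b) / monomialNormSq m (n + N) by ring]
    apply (div_le_div_iff_of_pos_right hcpos).mpr
    obtain ⟨k, hk⟩ : ∃ k, n + N = k + 1 := ⟨n + N - 1, by omega⟩
    have h1 : (N : ℝ) ^ 2 ≤ ((n + N : ℕ) : ℝ) ^ 2 := by
      have h2 : (N : ℝ) ≤ ((n + N : ℕ) : ℝ) := by exact_mod_cast Nat.le_add_left N n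
      nlinarith [Nat.cast_nonneg (α := ℝ) N]
    rw [hk] at h1 ⊢
    simp only [Nat.add_sub_cancel]
    calc (N : ℝ) ^ 2 * b ^ (k + 1) / b = (N : ℝ) ^ 2 * b ^ k := by
          rw [pow_succ]; field_simp; ring
      _ ≤ ((k + 1 : ℕ) : ℝ) ^ 2 * b ^ k :=
          mul_le_mul_of_nonneg_right h1 (pow_nonneg hb.le k)
  calc ((N : ℝ) ^ 2 / b) * ∑' n : ℕ, b ^ (n + N) / monomialNormSq m (n + N)
      = ∑' n : ℕ, ((N : ℝ) ^ 2 / b) * (b ^ (n + N) / monomialNormSq m (n + N)) := by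
        rw [tsum_mul_left]
    _ ≤ ∑' n : ℕ, ((n + N : ℕ) : ℝ) ^ 2 * b ^ (n + N - 1) / monomialNormSq m (n + N) := by
        apply Summable.tsum_le_tsum hterm ((hsb.comp_injective (add_left_injective N)).mul_left _)
        exact hsd.comp_injective (add_left_injective N)
    _ ≤ DD m b := by
        rw [DD]
        have := Summable.sum_add_tsum_nat_add (f := fun n : ℕ => (n : ℝ) ^ 2 * b ^ (n - 1) / monomialNormSq m n) N hsd
        have hhead : 0 ≤ ∑ i ∈ Finset.range N, ((i : ℝ) ^ 2 * b ^ (i - 1) / monomialNormSq m i) :=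
          Finset.sum_nonneg fun i _ => dterm_nonneg m b hb.le i
        linarith [this]
lemma exp_le_one_add (y y₀ : ℝ) (h0 : 0 ≤ y) (h1 : y ≤ y₀) :
    Real.exp y ≤ 1 + y * Real.exp y₀ := by
  have h2 := Real.add_one_le_exp (-y)
  have h3 : Real.exp y ≤ Real.exp y₀ := Real.exp_le_exp.mpr h1
  have h4 : 0 < Real.exp y := Real.exp_pos y
  have h5 : Real.exp (-y) * Real.exp y = 1 := by rw [← Real.exp_add]; simp
  nlinarith [mul_le_mul_of_nonneg_right h2 h4.le,
    mul_le_mul_of_nonneg_left h3 h0]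

lemma one_le_sqrt_two : (1:ℝ) ≤ Real.sqrt 2 := by
  nlinarith [Real.sq_sqrt (by norm_num : (0:ℝ) ≤ 2), Real.sqrt_nonneg 2]

lemma sqrt_two_le_two : Real.sqrt 2 ≤ 2 := by
  nlinarith [Real.sq_sqrt (by norm_num : (0:ℝ) ≤ 2), Real.sqrt_nonneg 2]
set_option maxHeartbeats 3000000 in
theorem kernel_deriv_norm_estimate (m : ℝ) (hm : 0 < m)
    (hK : ∃ c C R : ℝ, 0 < c ∧ 0 < C ∧ 0 < R ∧ ∀ w : ℂ, R ≤ ‖w‖ →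
      c * (‖w‖ ^ (m - 2) * Real.exp (2 * ‖w‖ ^ m)) ≤ kernelNormSq m w ∧
      kernelNormSq m w ≤ C * (‖w‖ ^ (m - 2) * Real.exp (2 * ‖w‖ ^ m))) :
    ∃ c C R : ℝ, 0 < c ∧ 0 < C ∧ 0 < R ∧ ∀ w : ℂ, R ≤ ‖w‖ →
      (c * (‖w‖ ^ (3 * m - 4) * Real.exp (2 * ‖w‖ ^ m))
          ≤ kernelDerivNormSq m w ∧
        kernelDerivNormSq m w
          ≤ C * (‖w‖ ^ (3 * m - 4) * Real.exp (2 * ‖w‖ ^ m))) ∧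
      (c * (kernelNormSq m w * ‖w‖ ^ (2 * m - 2)) ≤ kernelDerivNormSq m w ∧
        kernelDerivNormSq m w ≤ C * (kernelNormSq m w * ‖w‖ ^ (2 * m - 2))) := by
  obtain ⟨c, C, R, hc, hC, hR, hK⟩ := hK
  -- translate the hypothesis into a statement about `SS`
  have hS : ∀ r : ℝ, R ≤ r →
      c * (r ^ (m - 2) * Real.exp (2 * r ^ m)) ≤ SS m (r ^ 2) ∧
      SS m (r ^ 2) ≤ C * (r ^ (m - 2) * Real.exp (2 * r ^ m)) := by
    intro r hr
    have hr0 : 0 ≤ r := le_trans hR.le hr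
    have habs : ‖(r : ℂ)‖ = r := by
      rw [Complex.norm_of_nonneg hr0]
    have h := hK (r : ℂ) (by rwa [habs])
    rwa [kernelNormSq_eq_SS, habs] at h
  have hSpos : ∀ r : ℝ, R ≤ r → 0 < SS m (r ^ 2) := by
    intro r hr
    have hr0 : 0 < r := lt_of_lt_of_le hR hr
    exact lt_of_lt_of_le (by positivity) (hS r hr).1
  have hsum : ∀ r : ℝ, R ≤ r →
      Summable (fun n : ℕ => (r ^ 2) ^ n / monomialNormSq m n) := by
    intro r hr
    by_contra h
    exact absurd (tsum_eq_zero_of_not_summable h) (ne_of_gt (hSpos r hr))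
  -- constants
  set θ : ℝ := (2 : ℝ) ^ (-(m / 2)) with hθdef
  have hθ0 : 0 < θ := Real.rpow_pos_of_pos two_pos _
  have hθ1 : θ < 1 := Real.rpow_lt_one_of_one_lt_of_neg one_lt_two (by linarith)
  have hlog2 : 0 < Real.log 2 := Real.log_pos one_lt_two
  set ε : ℝ := (1 - θ) / Real.log 2 with hεdef
  have hε : 0 < ε := div_pos (by linarith) hlog2
  set Km : ℝ := m / 2 * Real.exp (m / 2) with hKmdef
  have hKm : 0 < Km := by positivity
  set C₁ : ℝ := C * (2 : ℝ) ^ m * Real.exp (2 * Km) with hC₁def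
  have hC₁ : 0 < C₁ := by positivity
  set B : ℝ := Real.log (16 * C / c) / (1 - θ) with hBdef
  set A : ℝ := max B (max (1 / ε) 1) with hAdef
  have hA1 : 1 ≤ A := le_max_of_le_right (le_max_right _ _)
  have hA0 : 0 < A := lt_of_lt_of_le one_pos hA1
  set R₀ : ℝ := max (Real.sqrt 2 * R) (max 1 (A ^ (1 / m))) with hR₀def
  have hR₀ : 0 < R₀ := lt_of_lt_of_le one_pos (le_max_of_le_right (le_max_left _ _))
  refine ⟨min (c * ε ^ 2 / 2) (ε ^ 2 / 2), max (4 * C₁) (4 * C₁ / c), R₀,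
    lt_min (by positivity) (by positivity), lt_of_lt_of_le (by positivity) (le_max_left _ _),
    hR₀, ?_⟩
  intro w hw
  set r : ℝ := ‖w‖ with hrdef
  have hr1 : 1 ≤ r := le_trans (le_max_of_le_right (le_max_left _ _)) hw
  have hr0 : 0 < r := lt_of_lt_of_le one_pos hr1
  have hrR : R ≤ r := by
    have h1 : R ≤ Real.sqrt 2 * R := le_mul_of_one_le_left hR.le one_le_sqrt_two
    exact le_trans h1 (le_trans (le_max_left _ _) hw)
  have hrm0 : 0 < r ^ m := Real.rpow_pos_of_pos hr0 m
  have hrm1 : 1 ≤ r ^ m := Real.one_le_rpow hr1 hm.le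
  have hrmA : A ≤ r ^ m := by
    have h1 : A ^ (1 / m) ≤ r := le_trans (le_max_of_le_right (le_max_right _ _)) hw
    have h2 : (A ^ (1 / m)) ^ m ≤ r ^ m :=
      Real.rpow_le_rpow (Real.rpow_nonneg hA0.le _) h1 hm.le
    rwa [← Real.rpow_mul hA0.le, one_div, inv_mul_cancel₀ hm.ne', Real.rpow_one] at h2
  set b : ℝ := r ^ 2 with hbdef
  have hb0 : 0 < b := by positivity
  set δ : ℝ := (r ^ m)⁻¹ with hδdef
  have hδ0 : 0 < δ := by positivity
  have hδ1 : δ ≤ 1 := by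
    rw [hδdef]
    exact inv_le_one_of_one_le₀ hrm1
  have hrmδ : r ^ m * δ = 1 := mul_inv_cancel₀ hrm0.ne'
  -- the larger radius
  set s : ℝ := b * (1 + δ) with hsdef
  have hs0 : 0 < s := by positivity
  set r' : ℝ := Real.sqrt s with hr'def
  have hr'0 : 0 < r' := Real.sqrt_pos.mpr hs0
  have hr'sq : r' ^ 2 = s := Real.sq_sqrt hs0.le
  have hbs : b ≤ s := by nlinarith
  have hrr' : r ≤ r' := by
    rw [hr'def, show r = Real.sqrt (r ^ 2) from (Real.sqrt_sq hr0.le).symm]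
    exact Real.sqrt_le_sqrt hbs
  have hr'R : R ≤ r' := le_trans hrR hrr'
  have hr'le : r' ≤ Real.sqrt 2 * r := by
    rw [hr'def, show Real.sqrt 2 * r = Real.sqrt (2 * r ^ 2) by
      rw [Real.sqrt_mul (by norm_num : (0:ℝ) ≤ 2), Real.sqrt_sq hr0.le]]
    exact Real.sqrt_le_sqrt (by nlinarith)
  have hsum_s : Summable fun n : ℕ => s ^ n / monomialNormSq m n := by
    have h := hsum r' hr'R
    rwa [hr'sq] at h
  -- rpow arithmetic : r' ^ m ≤ r ^ m + Km
  have hr'm : r' ^ m ≤ r ^ m + Km := by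
    have e0 : r' ^ m = r ^ m * (1 + δ) ^ (2⁻¹ * m) := by
      rw [hr'def, Real.sqrt_eq_rpow, ← Real.rpow_mul hs0.le, hsdef,
        Real.mul_rpow hb0.le (by positivity), hbdef, ← Real.rpow_natCast r 2,
        ← Real.rpow_mul hr0.le]
      rw [show ((2:ℕ):ℝ) * (1/2 * m) = m by push_cast; ring,
        show (1/2 : ℝ) * m = 2⁻¹ * m by ring]
    have e2 : (1 + δ) ^ (2⁻¹ * m) ≤ Real.exp (δ * (2⁻¹ * m)) := by
      have h1 : (1 + δ : ℝ) ^ (2⁻¹ * m) ≤ (Real.exp δ) ^ (2⁻¹ * m) :=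
        Real.rpow_le_rpow (by positivity) (by linarith [Real.add_one_le_exp δ])
          (by positivity)
      rwa [← Real.exp_mul] at h1
    have e3 : Real.exp (δ * (2⁻¹ * m)) ≤ 1 + (δ * (2⁻¹ * m)) * Real.exp (m / 2) :=
      exp_le_one_add _ (m / 2) (by positivity)
        (by calc δ * (2⁻¹ * m) ≤ 1 * (2⁻¹ * m) :=
              mul_le_mul_of_nonneg_right hδ1 (by positivity)
          _ = m / 2 := by ring)
    have e4 : r ^ m * (δ * (2⁻¹ * m) * Real.exp (m / 2)) = 2⁻¹ * m * Real.exp (m / 2) := by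
      rw [show r ^ m * (δ * (2⁻¹ * m) * Real.exp (m / 2))
        = (r ^ m * δ) * (2⁻¹ * m * Real.exp (m / 2)) by ring, hrmδ, one_mul]
    calc r' ^ m = r ^ m * (1 + δ) ^ (2⁻¹ * m) := e0
      _ ≤ r ^ m * (1 + δ * (2⁻¹ * m) * Real.exp (m / 2)) :=
          mul_le_mul_of_nonneg_left (e2.trans e3) hrm0.le
      _ = r ^ m + Km := by rw [mul_add, mul_one, e4, hKmdef]; ring
  -- rpow arithmetic : r' ^ (m - 2) ≤ 2 ^ m * r ^ (m - 2)
  have hr'p : r' ^ (m - 2) ≤ (2:ℝ) ^ m * r ^ (m - 2) := by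
    rcases le_or_gt 0 (m - 2) with hm2 | hm2
    · calc r' ^ (m - 2) ≤ (Real.sqrt 2 * r) ^ (m - 2) :=
            Real.rpow_le_rpow hr'0.le hr'le hm2
        _ = (Real.sqrt 2) ^ (m - 2) * r ^ (m - 2) :=
            Real.mul_rpow (Real.sqrt_nonneg 2) hr0.le
        _ ≤ (2:ℝ) ^ m * r ^ (m - 2) := by
            apply mul_le_mul_of_nonneg_right _ (Real.rpow_nonneg hr0.le _)
            calc (Real.sqrt 2) ^ (m - 2) ≤ (2:ℝ) ^ (m - 2) :=
                  Real.rpow_le_rpow (Real.sqrt_nonneg 2) sqrt_two_le_two hm2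
              _ ≤ (2:ℝ) ^ m := Real.rpow_le_rpow_of_exponent_le one_le_two (by linarith)
    · calc r' ^ (m - 2) ≤ r ^ (m - 2) :=
            Real.rpow_le_rpow_of_nonpos hr0 hrr' hm2.le
        _ ≤ (2:ℝ) ^ m * r ^ (m - 2) :=
            le_mul_of_one_le_left (Real.rpow_nonneg hr0.le _)
              (Real.one_le_rpow one_le_two hm.le)
  have hexp' : Real.exp (2 * r' ^ m) ≤ Real.exp (2 * Km) * Real.exp (2 * r ^ m) := by
    rw [← Real.exp_add]
    exact Real.exp_le_exp.mpr (by linarith)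
  -- the key algebraic identity for the prefactor
  have hpre : 4 / (δ ^ 2 * b) = 4 * r ^ (2 * m - 2) := by
    have h1 : δ ^ 2 * b = r ^ (2 - 2 * m) := by
      rw [hδdef, hbdef, ← Real.rpow_neg hr0.le, ← Real.rpow_natCast (r ^ (-m)) 2,
        ← Real.rpow_mul hr0.le, ← Real.rpow_natCast r 2, ← Real.rpow_add hr0]
      rw [show -m * ((2:ℕ):ℝ) + ((2:ℕ):ℝ) = 2 - 2 * m by push_cast; ring]
    rw [h1, div_eq_mul_inv, ← Real.rpow_neg hr0.le,
      show -(2 - 2 * m) = 2 * m - 2 by ring]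
  -- upper bound for DD
  have hDD_upper : DD m b ≤ 4 * r ^ (2 * m - 2) * (C₁ * (r ^ (m - 2) * Real.exp (2 * r ^ m))) := by
    have h1 : DD m b ≤ 4 / (δ ^ 2 * b) * SS m s := DD_le m b δ hb0 hδ0 hδ1 hsum_s
    have h2 : SS m s ≤ C₁ * (r ^ (m - 2) * Real.exp (2 * r ^ m)) := by
      have h3 : SS m s ≤ C * (r' ^ (m - 2) * Real.exp (2 * r' ^ m)) := by
        have := (hS r' hr'R).2
        rwa [hr'sq] at this
      calc SS m s ≤ C * (r' ^ (m - 2) * Real.exp (2 * r' ^ m)) := h3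
        _ ≤ C * (((2:ℝ) ^ m * r ^ (m - 2)) * (Real.exp (2 * Km) * Real.exp (2 * r ^ m))) := by
            apply mul_le_mul_of_nonneg_left _ hC.le
            exact mul_le_mul hr'p hexp' (Real.exp_pos _).le (by positivity)
        _ = C₁ * (r ^ (m - 2) * Real.exp (2 * r ^ m)) := by rw [hC₁def]; ring
    calc DD m b ≤ 4 / (δ ^ 2 * b) * SS m s := h1
      _ ≤ 4 / (δ ^ 2 * b) * (C₁ * (r ^ (m - 2) * Real.exp (2 * r ^ m))) :=
          mul_le_mul_of_nonneg_left h2 (by positivity)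
      _ = 4 * r ^ (2 * m - 2) * (C₁ * (r ^ (m - 2) * Real.exp (2 * r ^ m))) := by rw [hpre]
  -- lower bound preliminaries
  set N : ℕ := ⌈ε * r ^ m⌉₊ with hNdef
  have hεrm : 0 < ε * r ^ m := by positivity
  have hN1 : 1 ≤ N := Nat.ceil_pos.mpr hεrm
  have hNge : ε * r ^ m ≤ (N : ℝ) := Nat.le_ceil _
  have hNle : (N : ℝ) ≤ ε * r ^ m + 1 := (Nat.ceil_lt_add_one hεrm.le).le
  set r₂ : ℝ := r / Real.sqrt 2 with hr₂def
  have hsq2 : (0:ℝ) < Real.sqrt 2 := Real.sqrt_pos.mpr two_pos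
  have hr₂0 : 0 < r₂ := div_pos hr0 hsq2
  have hr₂R : R ≤ r₂ := by
    rw [hr₂def, le_div_iff₀ hsq2]
    calc R * Real.sqrt 2 = Real.sqrt 2 * R := mul_comm _ _
      _ ≤ r := le_trans (le_max_left _ _) hw
  have hr₂sq : r₂ ^ 2 = b / 2 := by
    rw [hr₂def, div_pow, Real.sq_sqrt (by norm_num : (0:ℝ) ≤ 2), hbdef]
  have hsum₂ : Summable fun n : ℕ => (b / 2) ^ n / monomialNormSq m n := by
    have h := hsum r₂ hr₂R
    rwa [hr₂sq] at h
  set hd : ℝ := ∑ i ∈ Finset.range N, b ^ i / monomialNormSq m i with hhddef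
  have hhead : hd ≤ 2 ^ N * SS m (b / 2) := head_le m b hb0.le N hsum₂
  have hr₂m : r₂ ^ m = θ * r ^ m := by
    rw [hr₂def, div_eq_mul_inv, Real.mul_rpow hr0.le (by positivity), Real.sqrt_eq_rpow,
      ← Real.rpow_neg (by norm_num : (0:ℝ) ≤ 2), ← Real.rpow_mul (by norm_num : (0:ℝ) ≤ 2),
      show -(1/2 : ℝ) * m = -(m/2) by ring]
    exact mul_comm _ _
  have hr₂p : r₂ ^ (m - 2) ≤ 4 * r ^ (m - 2) := by
    have hq : ((Real.sqrt 2)⁻¹ : ℝ) ^ (m - 2) ≤ 4 := by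
      rcases le_or_gt 0 (m - 2) with hm2 | hm2
      · have h1 : ((Real.sqrt 2)⁻¹ : ℝ) ^ (m - 2) ≤ 1 :=
          Real.rpow_le_one (by positivity) (inv_le_one_of_one_le₀ one_le_sqrt_two) hm2
        linarith
      · have h1 : ((Real.sqrt 2)⁻¹ : ℝ) ^ (m - 2) = (Real.sqrt 2) ^ (-(m - 2)) := by
          rw [Real.inv_rpow (Real.sqrt_nonneg 2), ← Real.rpow_neg (Real.sqrt_nonneg 2)]
        rw [h1]
        calc (Real.sqrt 2) ^ (-(m - 2)) ≤ (Real.sqrt 2) ^ (((2:ℕ):ℝ)) :=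
              Real.rpow_le_rpow_of_exponent_le one_le_sqrt_two (by push_cast; linarith)
          _ = 2 := by
              rw [Real.rpow_natCast, Real.sq_sqrt (by norm_num : (0:ℝ) ≤ 2)]
          _ ≤ 4 := by norm_num
    calc r₂ ^ (m - 2) = r ^ (m - 2) * ((Real.sqrt 2)⁻¹ : ℝ) ^ (m - 2) := by
          rw [hr₂def, div_eq_mul_inv, Real.mul_rpow hr0.le (by positivity)]
      _ ≤ r ^ (m - 2) * 4 := mul_le_mul_of_nonneg_left hq (Real.rpow_nonneg hr0.le _)
      _ = 4 * r ^ (m - 2) := by ring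
  have h2N : (2:ℝ) ^ N ≤ 2 * Real.exp ((1 - θ) * r ^ m) := by
    have h1 : (2:ℝ) ^ N = Real.exp (Real.log 2 * N) := by
      rw [Real.exp_mul, Real.exp_log two_pos, Real.rpow_natCast]
    have h3 : Real.log 2 * ε = 1 - θ := by
      rw [hεdef]; field_simp
    have h2 : Real.log 2 * (N:ℝ) ≤ (1 - θ) * r ^ m + Real.log 2 := by
      calc Real.log 2 * (N:ℝ) ≤ Real.log 2 * (ε * r ^ m + 1) :=
            mul_le_mul_of_nonneg_left hNle hlog2.le
        _ = (Real.log 2 * ε) * r ^ m + Real.log 2 := by ring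
        _ = (1 - θ) * r ^ m + Real.log 2 := by rw [h3]
    rw [h1]
    calc Real.exp (Real.log 2 * N) ≤ Real.exp ((1 - θ) * r ^ m + Real.log 2) :=
          Real.exp_le_exp.mpr h2
      _ = 2 * Real.exp ((1 - θ) * r ^ m) := by
          rw [Real.exp_add, Real.exp_log two_pos]; ring
  have hBrm : Real.log (16 * C / c) ≤ (1 - θ) * r ^ m := by
    have h1 : B ≤ r ^ m := le_trans (le_max_left _ _) hrmA
    rw [hBdef, div_le_iff₀ (by linarith)] at h1
    linarith
  have hgap : 16 * C / c ≤ Real.exp ((1 - θ) * r ^ m) := by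
    calc 16 * C / c = Real.exp (Real.log (16 * C / c)) :=
          (Real.exp_log (by positivity)).symm
      _ ≤ Real.exp ((1 - θ) * r ^ m) := Real.exp_le_exp.mpr hBrm
  have h9 : Real.exp (2 * r ^ m) = Real.exp ((1 + θ) * r ^ m) * Real.exp ((1 - θ) * r ^ m) := by
    rw [← Real.exp_add]; ring_nf
  have hheadSS : hd ≤ SS m b / 2 := by
    have h5 := (hS r₂ hr₂R).2
    rw [hr₂sq] at h5
    have h4 : SS m (b / 2) ≤ C * ((4 * r ^ (m - 2)) * Real.exp (2 * (θ * r ^ m))) := by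
      calc SS m (b / 2) ≤ C * (r₂ ^ (m - 2) * Real.exp (2 * r₂ ^ m)) := h5
        _ ≤ C * ((4 * r ^ (m - 2)) * Real.exp (2 * (θ * r ^ m))) := by
            apply mul_le_mul_of_nonneg_left _ hC.le
            rw [hr₂m]
            exact mul_le_mul_of_nonneg_right hr₂p (Real.exp_pos _).le
    have h6 : (2:ℝ) ^ N * SS m (b / 2)
        ≤ (2 * Real.exp ((1 - θ) * r ^ m)) * (C * ((4 * r ^ (m - 2)) * Real.exp (2 * (θ * r ^ m)))) :=
      mul_le_mul h2N h4 (SS_nonneg m (b / 2) (by positivity)) (by positivity)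
    have h8 : Real.exp ((1 - θ) * r ^ m) * Real.exp (2 * (θ * r ^ m))
        = Real.exp ((1 + θ) * r ^ m) := by
      rw [← Real.exp_add]; ring_nf
    have h10 : (2 * Real.exp ((1 - θ) * r ^ m)) * (C * ((4 * r ^ (m - 2)) * Real.exp (2 * (θ * r ^ m))))
        ≤ (c / 2) * (r ^ (m - 2) * Real.exp (2 * r ^ m)) := by
      have hX : (0:ℝ) ≤ r ^ (m - 2) := Real.rpow_nonneg hr0.le _
      have hE1 : (0:ℝ) < Real.exp ((1 + θ) * r ^ m) := Real.exp_pos _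
      calc (2 * Real.exp ((1 - θ) * r ^ m)) * (C * ((4 * r ^ (m - 2)) * Real.exp (2 * (θ * r ^ m))))
          = (8 * C) * (r ^ (m - 2) * (Real.exp ((1 - θ) * r ^ m) * Real.exp (2 * (θ * r ^ m)))) := by
            ring
        _ = (8 * C) * (r ^ (m - 2) * Real.exp ((1 + θ) * r ^ m)) := by rw [h8]
        _ = (c / 2) * (r ^ (m - 2) * (Real.exp ((1 + θ) * r ^ m) * (16 * C / c))) := by
            field_simp; ring
        _ ≤ (c / 2) * (r ^ (m - 2) * (Real.exp ((1 + θ) * r ^ m) * Real.exp ((1 - θ) * r ^ m))) := by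
            apply mul_le_mul_of_nonneg_left _ (by positivity)
            apply mul_le_mul_of_nonneg_left _ hX
            exact mul_le_mul_of_nonneg_left hgap hE1.le
        _ = (c / 2) * (r ^ (m - 2) * Real.exp (2 * r ^ m)) := by rw [h9]
    have h11 : (c / 2) * (r ^ (m - 2) * Real.exp (2 * r ^ m)) ≤ SS m b / 2 := by
      have h12 := (hS r hrR).1
      rw [← hbdef] at h12
      linarith
    linarith
  -- assemble the lower bound for DD
  have hsumb : Summable fun n : ℕ => b ^ n / monomialNormSq m n := by
    have h := hsum r hrR
    rwa [← hbdef] at h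
  have hsumd : Summable fun n : ℕ => (n:ℝ) ^ 2 * b ^ (n - 1) / monomialNormSq m n :=
    dsummable m b δ hb0 hδ0 hδ1 hsum_s
  have hDDlow := DD_ge m b hb0 N hN1 hsumb hsumd
  rw [← hhddef] at hDDlow
  have hSSb0 : 0 ≤ SS m b := SS_nonneg m b hb0.le
  have h3' : (r ^ m) ^ 2 / b = r ^ (2 * m - 2) := by
    rw [hbdef, ← Real.rpow_natCast (r ^ m) 2, ← Real.rpow_mul hr0.le,
      ← Real.rpow_natCast r 2, ← Real.rpow_sub hr0,
      show m * ((2:ℕ):ℝ) - ((2:ℕ):ℝ) = 2 * m - 2 by push_cast; ring]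
  have hNsq : ε ^ 2 * r ^ (2 * m - 2) ≤ (N:ℝ) ^ 2 / b := by
    have h2 : (ε * r ^ m) ^ 2 ≤ (N:ℝ) ^ 2 := pow_le_pow_left₀ hεrm.le hNge 2
    calc ε ^ 2 * r ^ (2 * m - 2) = (ε * r ^ m) ^ 2 / b := by rw [← h3']; ring
      _ ≤ (N:ℝ) ^ 2 / b := (div_le_div_iff_of_pos_right hb0).mpr h2
  have hDD_lower : (ε ^ 2 / 2) * (SS m b * r ^ (2 * m - 2)) ≤ DD m b := by
    calc (ε ^ 2 / 2) * (SS m b * r ^ (2 * m - 2))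
        = (ε ^ 2 * r ^ (2 * m - 2)) * (SS m b / 2) := by ring
      _ ≤ ((N:ℝ) ^ 2 / b) * (SS m b / 2) :=
          mul_le_mul_of_nonneg_right hNsq (by linarith)
      _ ≤ ((N:ℝ) ^ 2 / b) * (SS m b - hd) :=
          mul_le_mul_of_nonneg_left (by linarith) (by positivity)
      _ ≤ DD m b := hDDlow
  -- final conversions
  have hkd : kernelDerivNormSq m w = DD m b := by
    rw [kernelDerivNormSq_eq_DD, hbdef, hrdef]
  have hkn : kernelNormSq m w = SS m b := by
    rw [kernelNormSq_eq_SS, hbdef, hrdef]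
  have hSSlow := (hS r hrR).1
  rw [← hbdef] at hSSlow
  have hrp34 : r ^ (2 * m - 2) * r ^ (m - 2) = r ^ (3 * m - 4) := by
    rw [← Real.rpow_add hr0, show 2 * m - 2 + (m - 2) = 3 * m - 4 by ring]
  have hX34 : (0:ℝ) ≤ r ^ (3 * m - 4) * Real.exp (2 * r ^ m) := by positivity
  have hXSS : (0:ℝ) ≤ SS m b * r ^ (2 * m - 2) :=
    mul_nonneg hSSb0 (Real.rpow_nonneg hr0.le _)
  refine ⟨⟨?_, ?_⟩, ?_, ?_⟩
  · rw [hkd]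
    calc min (c * ε ^ 2 / 2) (ε ^ 2 / 2) * (r ^ (3 * m - 4) * Real.exp (2 * r ^ m))
        ≤ (c * ε ^ 2 / 2) * (r ^ (3 * m - 4) * Real.exp (2 * r ^ m)) :=
          mul_le_mul_of_nonneg_right (min_le_left _ _) hX34
      _ = (ε ^ 2 / 2) * ((c * (r ^ (m - 2) * Real.exp (2 * r ^ m))) * r ^ (2 * m - 2)) := by
          rw [← hrp34]; ring
      _ ≤ (ε ^ 2 / 2) * (SS m b * r ^ (2 * m - 2)) := by
          apply mul_le_mul_of_nonneg_left _ (by positivity)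
          exact mul_le_mul_of_nonneg_right hSSlow (Real.rpow_nonneg hr0.le _)
      _ ≤ DD m b := hDD_lower
  · rw [hkd]
    calc DD m b ≤ 4 * r ^ (2 * m - 2) * (C₁ * (r ^ (m - 2) * Real.exp (2 * r ^ m))) := hDD_upper
      _ = (4 * C₁) * (r ^ (3 * m - 4) * Real.exp (2 * r ^ m)) := by rw [← hrp34]; ring
      _ ≤ max (4 * C₁) (4 * C₁ / c) * (r ^ (3 * m - 4) * Real.exp (2 * r ^ m)) :=
          mul_le_mul_of_nonneg_right (le_max_left _ _) hX34
  · rw [hkd, hkn]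
    calc min (c * ε ^ 2 / 2) (ε ^ 2 / 2) * (SS m b * r ^ (2 * m - 2))
        ≤ (ε ^ 2 / 2) * (SS m b * r ^ (2 * m - 2)) :=
          mul_le_mul_of_nonneg_right (min_le_right _ _) hXSS
      _ ≤ DD m b := hDD_lower
  · rw [hkd, hkn]
    calc DD m b ≤ 4 * r ^ (2 * m - 2) * (C₁ * (r ^ (m - 2) * Real.exp (2 * r ^ m))) := hDD_upper
      _ = (4 * C₁ / c) * ((c * (r ^ (m - 2) * Real.exp (2 * r ^ m))) * r ^ (2 * m - 2)) := by
          field_simp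
      _ ≤ (4 * C₁ / c) * (SS m b * r ^ (2 * m - 2)) := by
          apply mul_le_mul_of_nonneg_left _ (by positivity)
          exact mul_le_mul_of_nonneg_right hSSlow (Real.rpow_nonneg hr0.le _)
      _ ≤ max (4 * C₁) (4 * C₁ / c) * (SS m b * r ^ (2 * m - 2)) :=
          mul_le_mul_of_nonneg_right (le_max_right _ _) hXSS
end

section
/- Let 0 < p < ∞ and m > 0, and let ‖z^n‖_{(m,p)} denote the F_{(m,p)}-norm of the monomial z^n. Then the ratio n ‖z^{n-1}‖_{(m,p)} / ‖z^n‖_{(m,p)} equals n (2π)^{0} p^{p/m} (Γ((p(n-1)+2)/m) / Γ((pn+2)/m))^{1/p}, and in particular the operator norm lower bound ‖D z^n‖_{(m,p)} / ‖z^n‖_{(m,p)} grows like n^{1 - 1/m} up to constants as n → ∞; hence D is unbounded on F_{(m,p)} whenever m > 1. -/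
open MeasureTheory Real Complex Set

/-- The `F_{(m,p)}`-norm of the monomial `z ^ n`. -/
noncomputable def monomialNorm (m p : ℝ) (n : ℕ) : ℝ :=
  (∫ z : ℂ, ‖z‖ ^ (p * (n : ℝ)) * Real.exp (-p * ‖z‖ ^ m)) ^ (1 / p)

theorem my_integral_eval {m q b : ℝ} (hm : 0 < m) (hq : -2 < q) (hb : 0 < b) :
    ∫ x : ℂ, ‖x‖ ^ q * rexp (- b * ‖x‖ ^ m) = (2 * π / m) *
      b ^ (-(q + 2) / m) * Real.Gamma ((q + 2) / m) := by
  calc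
    _ = ∫ x in Ioi (0 : ℝ) ×ˢ Ioo (-π) π, x.1 * (|x.1| ^ q * rexp (- b * |x.1| ^ m)) := by
      rw [← Complex.integral_comp_polarCoord_symm, polarCoord_target]
      simp_rw [Complex.norm_polarCoord_symm, smul_eq_mul]
    _ = (∫ x in Ioi (0 : ℝ), x * |x| ^ q * rexp (- b * |x| ^ m)) * ∫ _ in Ioo (-π) π, 1 := by
      rw [← setIntegral_prod_mul, Measure.volume_eq_prod]
      simp_rw [mul_one]
      congr! 2; ring
    _ = 2 * π * ∫ x in Ioi (0 : ℝ), x * |x| ^ q * rexp (- b * |x| ^ m) := by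
      simp_rw [integral_const, measureReal_restrict_apply_univ,
        Real.volume_real_Ioo, sub_neg_eq_add, ← two_mul, max_eq_left (by positivity : 0 ≤ 2 * π),
        smul_eq_mul, mul_one, mul_comm]
    _ = 2 * π * ∫ x in Ioi (0 : ℝ), x ^ (q + 1) * rexp (-b * x ^ m) := by
      congr 1
      refine setIntegral_congr_fun measurableSet_Ioi (fun x hx => ?_)
      rw [mem_Ioi] at hx
      rw [abs_eq_self.mpr hx.le, rpow_add hx, rpow_one]
      ring
    _ = (2 * π / m) * b ^ (-(q + 2) / m) * Real.Gamma ((q + 2) / m) := by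
      rw [_root_.integral_rpow_mul_exp_neg_mul_rpow hm (by linarith) hb, add_assoc,
        one_add_one_eq_two]
      ring

theorem my_gamma_bounds {a x : ℝ} (ha : 0 < a) (hx : 2 ≤ x) :
    (x - 1) ^ a * Real.Gamma x ≤ Real.Gamma (x + a) ∧
      Real.Gamma (x + a) ≤ (x + a) ^ a * Real.Gamma x := by
  have hx0 : (0:ℝ) < x := by linarith
  have hx1 : (0:ℝ) < x - 1 := by linarith
  have hxa : (0:ℝ) < x + a := by linarith
  have hG : ∀ y : ℝ, 0 < y → Real.Gamma y = rexp (Real.log (Real.Gamma y)) := fun y hy =>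
    (Real.exp_log (Real.Gamma_pos_of_pos hy)).symm
  have hconv := Real.convexOn_log_Gamma
  constructor
  · have h := hconv.slope_mono_adjacent (x := x - 1) (y := x) (z := x + a)
      (by simpa using hx1) (by simpa using hxa) (by linarith) (by linarith)
    simp only [Function.comp_apply] at h
    have hΓx : Real.Gamma x = (x - 1) * Real.Gamma (x - 1) := by
      have := Real.Gamma_add_one (s := x - 1) hx1.ne'
      simpa using this
    have hlog : Real.log (Real.Gamma x) - Real.log (Real.Gamma (x - 1)) = Real.log (x - 1) := by
      rw [hΓx, Real.log_mul hx1.ne' (Real.Gamma_pos_of_pos (by linarith)).ne']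
      ring
    rw [show x - (x - 1) = 1 by ring, show x + a - x = a by ring, div_one, hlog] at h
    have h2 : a * Real.log (x - 1) ≤
        Real.log (Real.Gamma (x + a)) - Real.log (Real.Gamma x) := by
      have := (le_div_iff₀ ha).mp h
      linarith
    calc (x - 1) ^ a * Real.Gamma x
        = rexp (a * Real.log (x - 1) + Real.log (Real.Gamma x)) := by
          rw [Real.exp_add, Real.rpow_def_of_pos hx1, ← hG x hx0, mul_comm (Real.log _)]
      _ ≤ rexp (Real.log (Real.Gamma (x + a))) := by
          apply Real.exp_le_exp.mpr; linarith
      _ = Real.Gamma (x + a) := (hG _ hxa).symm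
  · have h := hconv.slope_mono_adjacent (x := x) (y := x + a) (z := x + a + 1)
      (by simpa using hx0) (by simp; linarith) (by linarith) (by linarith)
    simp only [Function.comp_apply] at h
    have hΓ : Real.Gamma (x + a + 1) = (x + a) * Real.Gamma (x + a) :=
      Real.Gamma_add_one hxa.ne'
    have hlog : Real.log (Real.Gamma (x + a + 1)) - Real.log (Real.Gamma (x + a))
        = Real.log (x + a) := by
      rw [hΓ, Real.log_mul hxa.ne' (Real.Gamma_pos_of_pos hxa).ne']
      ring
    rw [show x + a + 1 - (x + a) = 1 by ring, show x + a - x = a by ring, div_one, hlog] at h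
    have h2 : Real.log (Real.Gamma (x + a)) - Real.log (Real.Gamma x) ≤
        a * Real.log (x + a) := by
      have := (div_le_iff₀ ha).mp h
      linarith
    calc Real.Gamma (x + a) = rexp (Real.log (Real.Gamma (x + a))) := hG _ hxa
      _ ≤ rexp (a * Real.log (x + a) + Real.log (Real.Gamma x)) := by
          apply Real.exp_le_exp.mpr; linarith
      _ = (x + a) ^ a * Real.Gamma x := by
          rw [Real.exp_add, Real.rpow_def_of_pos hxa, ← hG x hx0, mul_comm (Real.log _)]

theorem my_monomialNorm_eq {m p : ℝ} (hm : 0 < m) (hp : 0 < p) (n : ℕ) :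
    monomialNorm m p n =
      ((2 * π / m) * p ^ (-(p * (n:ℝ) + 2) / m) * Real.Gamma ((p * (n:ℝ) + 2) / m)) ^ (1 / p) := by
  rw [monomialNorm]
  congr 1
  have := my_integral_eval (q := p * (n:ℝ)) hm (by nlinarith [mul_nonneg hp.le (Nat.cast_nonneg (α := ℝ) n)]) hp
  rw [this]

theorem my_G_pos {m p : ℝ} (hm : 0 < m) (hp : 0 < p) (n : ℕ) :
    0 < (2 * π / m) * p ^ (-(p * (n:ℝ) + 2) / m) * Real.Gamma ((p * (n:ℝ) + 2) / m) := by
  have h1 : 0 < (p * (n:ℝ) + 2) / m := by positivity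
  have := Real.Gamma_pos_of_pos h1
  have hπ := Real.pi_pos
  positivity

theorem my_norm_pos {m p : ℝ} (hm : 0 < m) (hp : 0 < p) (n : ℕ) :
    0 < monomialNorm m p n := by
  rw [my_monomialNorm_eq hm hp]
  exact Real.rpow_pos_of_pos (my_G_pos hm hp n) _

theorem my_part1 {m p : ℝ} (hm : 0 < m) (hp : 0 < p) (n : ℕ) (hn : 1 ≤ n) :
    (n : ℝ) * monomialNorm m p (n - 1) / monomialNorm m p n =
      (n : ℝ) * (p ^ (p / m) *
        (Real.Gamma ((p * ((n : ℝ) - 1) + 2) / m) /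
          Real.Gamma ((p * (n : ℝ) + 2) / m))) ^ (1 / p) := by
  have hcast : ((n - 1 : ℕ) : ℝ) = (n : ℝ) - 1 := by
    rw [Nat.cast_sub hn]; norm_num
  have hGn := my_G_pos hm hp n
  have hGn1 := my_G_pos hm hp (n - 1)
  rw [my_monomialNorm_eq hm hp, my_monomialNorm_eq hm hp, hcast] at *
  rw [mul_div_assoc, ← Real.div_rpow hGn1.le hGn.le]
  congr 2
  have hΓn : 0 < Real.Gamma ((p * (n:ℝ) + 2) / m) :=
    Real.Gamma_pos_of_pos (by positivity)
  have hΓn1 : 0 < Real.Gamma ((p * ((n:ℝ) - 1) + 2) / m) := by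
    apply Real.Gamma_pos_of_pos
    apply div_pos _ hm
    have : (1:ℝ) ≤ (n:ℝ) := by exact_mod_cast hn
    nlinarith
  have hpow : p ^ (-(p * ((n:ℝ) - 1) + 2) / m) = p ^ (p / m) * p ^ (-(p * (n:ℝ) + 2) / m) := by
    rw [← Real.rpow_add hp]
    congr 1
    field_simp
    ring
  rw [hpow]
  have h2π : (0:ℝ) < 2 * π / m := by have := Real.pi_pos; positivity
  have hpw : (0:ℝ) < p ^ (-(p * (n:ℝ) + 2) / m) := Real.rpow_pos_of_pos hp _
  field_simp

theorem my_part2 {m p : ℝ} (hm : 0 < m) (hp : 0 < p) :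
    ∃ c C : ℝ, ∃ N : ℕ, 0 < c ∧ 0 < C ∧ 1 ≤ N ∧ ∀ n : ℕ, N ≤ n →
      c * (n : ℝ) ^ (1 - 1 / m) ≤ (n : ℝ) * monomialNorm m p (n - 1) / monomialNorm m p n ∧
      (n : ℝ) * monomialNorm m p (n - 1) / monomialNorm m p n ≤ C * (n : ℝ) ^ (1 - 1 / m) := by
  have ha : 0 < p / m := by positivity
  refine ⟨p ^ (1/m) * ((p+2)/m) ^ (-(1/m)), p ^ (1/m) * (p/(2*m)) ^ (-(1/m)),
    ⌈2*(p+m)/p + 2*m/p + 2⌉₊ + 1,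
    by positivity, by positivity, Nat.le_add_left 1 _, fun n hn => ?_⟩
  set nR := (n : ℝ) with hnR
  have hceil : (2*(p+m)/p + 2*m/p + 2 : ℝ) ≤ (⌈2*(p+m)/p + 2*m/p + 2⌉₊ : ℝ) := Nat.le_ceil _
  have hcast : ((⌈2*(p+m)/p + 2*m/p + 2⌉₊ + 1 : ℕ) : ℝ) ≤ nR := Nat.cast_le.mpr hn
  push_cast at hcast
  have hNle : 2*(p+m)/p + 2*m/p + 2 ≤ nR := by linarith
  have hd1 : (0:ℝ) ≤ 2*(p+m)/p := by positivity
  have hd2 : (0:ℝ) ≤ 2*m/p := by positivity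
  have hn1R : (1:ℝ) ≤ nR := by linarith
  have hnpos : (0:ℝ) < nR := by linarith
  have hn1 : 1 ≤ n := by exact_mod_cast Nat.one_le_cast.mp (by exact_mod_cast hn1R)
  set x := (p * (nR - 1) + 2) / m with hxdef
  have hq1 : 2*(p+m) ≤ p * nR := by
    have := mul_le_mul_of_nonneg_left hNle hp.le
    have h1 : p * (2*(p+m)/p) = 2*(p+m) := by field_simp
    nlinarith
  have hq2 : 2*m ≤ p * nR := by
    have := mul_le_mul_of_nonneg_left hNle hp.le
    have h1 : p * (2*m/p) = 2*m := by field_simp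
    nlinarith
  have hx2 : 2 ≤ x := by
    rw [hxdef, le_div_iff₀ hm]
    nlinarith
  have hx1 : (0:ℝ) < x - 1 := by linarith
  have hxpos : (0:ℝ) < x := by linarith
  have hxa : x + p/m = (p * nR + 2) / m := by
    rw [hxdef, ← add_div]; congr 1; ring
  have hxapos : (0:ℝ) < x + p/m := by positivity
  have h_hi : x + p/m ≤ (p+2)/m * nR := by
    rw [hxa, show (p+2)/m * nR = ((p+2) * nR)/m by ring, div_le_div_iff_of_pos_right]
    · nlinarith
    · exact hm
  have h_lo : p/(2*m) * nR ≤ x - 1 := by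
    have e : p/(2*m) * nR * m = p * nR / 2 := by field_simp
    have h2 : (p/(2*m) * nR + 1) * m ≤ p * (nR - 1) + 2 := by nlinarith
    have h3 : p/(2*m) * nR + 1 ≤ x := by rw [hxdef, le_div_iff₀ hm]; exact h2
    linarith
  have hΓx : 0 < Real.Gamma x := Real.Gamma_pos_of_pos hxpos
  have hΓxa : 0 < Real.Gamma (x + p/m) := Real.Gamma_pos_of_pos hxapos
  obtain ⟨hgl, hgu⟩ := my_gamma_bounds ha hx2
  have hrl : (x + p/m) ^ (-(p/m)) ≤ Real.Gamma x / Real.Gamma (x + p/m) := by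
    have h' : Real.Gamma x / ((x + p/m) ^ (p/m) * Real.Gamma x)
        ≤ Real.Gamma x / Real.Gamma (x + p/m) := by
      gcongr
    have e : Real.Gamma x / ((x + p/m) ^ (p/m) * Real.Gamma x) = (x + p/m) ^ (-(p/m)) := by
      rw [Real.rpow_neg hxapos.le]
      field_simp
    rw [← e]; exact h'
  have hru : Real.Gamma x / Real.Gamma (x + p/m) ≤ (x - 1) ^ (-(p/m)) := by
    have h' : Real.Gamma x / Real.Gamma (x + p/m)
        ≤ Real.Gamma x / ((x - 1) ^ (p/m) * Real.Gamma x) := by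
      gcongr
    have e : Real.Gamma x / ((x - 1) ^ (p/m) * Real.Gamma x) = (x - 1) ^ (-(p/m)) := by
      rw [Real.rpow_neg hx1.le]
      field_simp
    rw [← e]; exact h'
  have hsimp : ∀ t : ℝ, 0 < t → (p ^ (p/m) * t ^ (-(p/m))) ^ (1/p)
      = p ^ (1/m) * t ^ (-(1/m)) := by
    intro t ht
    rw [Real.mul_rpow (Real.rpow_nonneg hp.le _) (Real.rpow_nonneg ht.le _),
      ← Real.rpow_mul hp.le, ← Real.rpow_mul ht.le,
      show (p/m) * (1/p) = 1/m from by field_simp,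
      show (-(p/m)) * (1/p) = -(1/m) from by field_simp]
  rw [my_part1 hm hp n hn1, ← hnR, ← hxdef, ← hxa]
  have hnegexp : -(1/m) ≤ (0:ℝ) := by
    rw [neg_nonpos]; positivity
  constructor
  · have step1 : (p ^ (p/m) * ((x + p/m) ^ (-(p/m)))) ^ (1/p)
        ≤ (p ^ (p/m) * (Real.Gamma x / Real.Gamma (x + p/m))) ^ (1/p) := by
      apply Real.rpow_le_rpow (by positivity) _ (by positivity)
      exact mul_le_mul_of_nonneg_left hrl (by positivity)
    have step2 : ((p+2)/m * nR) ^ (-(1/m)) ≤ (x + p/m) ^ (-(1/m)) :=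
      Real.rpow_le_rpow_of_nonpos hxapos h_hi hnegexp
    calc p ^ (1/m) * ((p+2)/m) ^ (-(1/m)) * nR ^ (1 - 1/m)
        = nR * (p ^ (1/m) * ((p+2)/m * nR) ^ (-(1/m))) := by
          rw [Real.mul_rpow (by positivity) hnpos.le,
            show (1 - 1/m : ℝ) = 1 + (-(1/m)) by ring, Real.rpow_add hnpos, Real.rpow_one]
          ring
      _ ≤ nR * (p ^ (1/m) * (x + p/m) ^ (-(1/m))) := by
          apply mul_le_mul_of_nonneg_left _ hnpos.le
          exact mul_le_mul_of_nonneg_left step2 (by positivity)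
      _ = nR * (p ^ (p/m) * ((x + p/m) ^ (-(p/m)))) ^ (1/p) := by rw [hsimp _ hxapos]
      _ ≤ nR * (p ^ (p/m) * (Real.Gamma x / Real.Gamma (x + p/m))) ^ (1/p) :=
          mul_le_mul_of_nonneg_left step1 hnpos.le
  · have step1 : (p ^ (p/m) * (Real.Gamma x / Real.Gamma (x + p/m))) ^ (1/p)
        ≤ (p ^ (p/m) * ((x - 1) ^ (-(p/m)))) ^ (1/p) := by
      apply Real.rpow_le_rpow (by positivity) _ (by positivity)
      exact mul_le_mul_of_nonneg_left hru (by positivity)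
    have step2 : (x - 1) ^ (-(1/m)) ≤ (p/(2*m) * nR) ^ (-(1/m)) :=
      Real.rpow_le_rpow_of_nonpos (by positivity) h_lo hnegexp
    calc nR * (p ^ (p/m) * (Real.Gamma x / Real.Gamma (x + p/m))) ^ (1/p)
        ≤ nR * (p ^ (p/m) * ((x - 1) ^ (-(p/m)))) ^ (1/p) :=
          mul_le_mul_of_nonneg_left step1 hnpos.le
      _ = nR * (p ^ (1/m) * (x - 1) ^ (-(1/m))) := by rw [hsimp _ hx1]
      _ ≤ nR * (p ^ (1/m) * (p/(2*m) * nR) ^ (-(1/m))) := by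
          apply mul_le_mul_of_nonneg_left _ hnpos.le
          exact mul_le_mul_of_nonneg_left step2 (by positivity)
      _ = p ^ (1/m) * (p/(2*m)) ^ (-(1/m)) * nR ^ (1 - 1/m) := by
          rw [Real.mul_rpow (by positivity) hnpos.le,
            show (1 - 1/m : ℝ) = 1 + (-(1/m)) by ring, Real.rpow_add hnpos, Real.rpow_one]
          ring

theorem D_unbounded_from_monomials (m p : ℝ) (hm : 0 < m) (hp : 0 < p) :
    (∀ n : ℕ, 1 ≤ n →
      (n : ℝ) * monomialNorm m p (n - 1) / monomialNorm m p n =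
        (n : ℝ) * (p ^ (p / m) *
          (Real.Gamma ((p * ((n : ℝ) - 1) + 2) / m) /
            Real.Gamma ((p * (n : ℝ) + 2) / m))) ^ (1 / p)) ∧
    (∃ c C : ℝ, ∃ N : ℕ, 0 < c ∧ 0 < C ∧ ∀ n : ℕ, N ≤ n →
      c * (n : ℝ) ^ (1 - 1 / m) ≤ (n : ℝ) * monomialNorm m p (n - 1) / monomialNorm m p n ∧
      (n : ℝ) * monomialNorm m p (n - 1) / monomialNorm m p n ≤ C * (n : ℝ) ^ (1 - 1 / m)) ∧
    (1 < m → ¬ ∃ K : ℝ, ∀ n : ℕ, 1 ≤ n →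
      (n : ℝ) * monomialNorm m p (n - 1) ≤ K * monomialNorm m p n) := by
  obtain ⟨c, C, N, hc, hC, hN1, hbound⟩ := my_part2 hm hp
  refine ⟨fun n hn => my_part1 hm hp n hn, ⟨c, C, N, hc, hC, fun n hn => hbound n hn⟩, ?_⟩
  intro hm1 ⟨K, hK⟩
  have hexp : 0 < 1 - 1 / m := by
    have : 1 / m < 1 := by
      rw [div_lt_one hm]; exact hm1
    linarith
  have htend : Filter.Tendsto (fun n : ℕ => c * (n : ℝ) ^ (1 - 1 / m))
      Filter.atTop Filter.atTop := by
    apply Filter.Tendsto.const_mul_atTop hc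
    exact (tendsto_rpow_atTop hexp).comp tendsto_natCast_atTop_atTop
  obtain ⟨n, hgt, hge⟩ :=
    ((htend.eventually_gt_atTop K).and (Filter.eventually_ge_atTop N)).exists
  have hratio := (hbound n hge).1
  have hn1 : 1 ≤ n := le_trans hN1 hge
  have hNn := my_norm_pos hm hp n
  have hle : (n : ℝ) * monomialNorm m p (n - 1) / monomialNorm m p n ≤ K := by
    rw [div_le_iff₀ hNn]
    calc (n : ℝ) * monomialNorm m p (n - 1) ≤ K * monomialNorm m p n := hK n hn1
      _ = K * monomialNorm m p n := rfl
  linarith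
end
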